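/- Let G ≤ ∏_n G_n be a closed subdirect product of countable discrete abelian torsion groups, and suppose that for every prime p the p-Sylow subgroup S_p of G is locally compact. Then, given an enumeration {p_k} of the primes, there is a strictly increasing sequence (i_k) of natural numbers such that each K_k = G_{⟨i_k⟩} ∩ S_{p_k} is compact, and the internal product K = ∏_k K_k is a compact subgroup of G. -/

import Mathlib

section Aux

variable {A : ℕ → Type*} [∀ n, AddCommGroup (A n)]
    [∀ n, TopologicalSpace (A n)] [∀ n, DiscreteTopology (A n)]

/-- The set of elements all of whose coordinates have `p`-power order is closed. -/
lemma stmt15_closed_ord (p : ℕ) :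
    IsClosed {g : ∀ n, A n | ∀ n, ∃ j : ℕ, addOrderOf (g n) = p ^ j} := by
  have : {g : ∀ n, A n | ∀ n, ∃ j : ℕ, addOrderOf (g n) = p ^ j}
      = ⋂ n, (fun g : ∀ n, A n => g n) ⁻¹' {a : A n | ∃ j : ℕ, addOrderOf a = p ^ j} := by
    ext g; simp [Set.mem_iInter]
  rw [this]
  exact isClosed_iInter fun n => (isClosed_discrete _).preimage (continuous_apply n)

/-- The set of elements vanishing up to coordinate `m` is closed. -/
lemma stmt15_closed_van (m : ℕ) :
    IsClosed {g : ∀ n, A n | ∀ n ≤ m, g n = 0} := by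
  have : {g : ∀ n, A n | ∀ n ≤ m, g n = 0}
      = ⋂ n, ⋂ (_ : n ≤ m), (fun g : ∀ n, A n => g n) ⁻¹' {(0 : A n)} := by
    ext g; simp [Set.mem_iInter]
  rw [this]
  exact isClosed_iInter fun n => isClosed_iInter fun _ =>
    (isClosed_discrete _).preimage (continuous_apply n)

/-- Sums of elements of `p`-power order have `p`-power order. -/
lemma stmt15_ord_add {p : ℕ} (hp : p.Prime) {M : Type*} [AddCommGroup M] {a b : M}
    (ha : ∃ j : ℕ, addOrderOf a = p ^ j) (hb : ∃ j : ℕ, addOrderOf b = p ^ j) :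
    ∃ j : ℕ, addOrderOf (a + b) = p ^ j := by
  obtain ⟨ja, hja⟩ := ha
  obtain ⟨jb, hjb⟩ := hb
  have hd : addOrderOf (a + b) ∣ p ^ (max ja jb) := by
    refine ((AddCommute.all a b).addOrderOf_add_dvd_lcm).trans ?_
    rw [hja, hjb]
    exact Nat.lcm_dvd (pow_dvd_pow p (le_max_left _ _)) (pow_dvd_pow p (le_max_right _ _))
  obtain ⟨j, _, hj⟩ := (Nat.dvd_prime_pow hp).mp hd
  exact ⟨j, hj⟩

end Aux

/-- in a closed subdirect product `G` of countable discrete abelian torsion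
groups all of whose Sylow subgroups are locally compact, for any enumeration `pk` of the
primes there is a strictly increasing sequence `i` such that each
`K_k = G_⟨i k⟩ ∩ S_{pk k}` is compact and the subgroup `K` they generate (a closed
subgroup of `G`, every element being a convergent sum) is compact. -/
theorem stmt_15 (A : ℕ → Type*) [∀ n, AddCommGroup (A n)] [∀ n, Countable (A n)]
    [∀ n, TopologicalSpace (A n)] [∀ n, DiscreteTopology (A n)]
    (G : AddSubgroup (∀ n, A n)) (hclosed : IsClosed (G : Set (∀ n, A n)))
    (hsub : ∀ n (a : A n), ∃ g ∈ G, g n = a)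
    (htor : ∀ n, AddMonoid.IsTorsion (A n))
    (hSylow : ∀ p : ℕ, p.Prime →
      LocallyCompactSpace {g : ∀ n, A n // g ∈ G ∧ ∀ n, ∃ k : ℕ, addOrderOf (g n) = p ^ k})
    (pk : ℕ → ℕ) (hpk : ∀ k, (pk k).Prime) (hinj : Function.Injective pk)
    (hall : ∀ q : ℕ, q.Prime → ∃ k, pk k = q) :
    ∃ i : ℕ → ℕ, StrictMono i ∧
      (∀ k, IsCompact {g : ∀ n, A n |
        (g ∈ G ∧ ∀ m ≤ i k, g m = 0) ∧ ∀ n, ∃ j : ℕ, addOrderOf (g n) = pk k ^ j}) ∧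
      IsCompact (closure (AddSubgroup.closure (⋃ k, {g : ∀ n, A n |
        (g ∈ G ∧ ∀ m ≤ i k, g m = 0) ∧ ∀ n, ∃ j : ℕ, addOrderOf (g n) = pk k ^ j})
          : Set (∀ n, A n))) ∧
      closure (AddSubgroup.closure (⋃ k, {g : ∀ n, A n |
        (g ∈ G ∧ ∀ m ≤ i k, g m = 0) ∧ ∀ n, ∃ j : ℕ, addOrderOf (g n) = pk k ^ j})
          : Set (∀ n, A n)) ⊆ (G : Set (∀ n, A n)) := by
  classical
  set X := ∀ n, A n with hX
  -- Step 1: for every prime p, some `G_⟨m⟩ ∩ S_p` is compact.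
  have step1 : ∀ p : ℕ, p.Prime → ∃ m : ℕ, IsCompact {g : X |
      (g ∈ G ∧ ∀ n ≤ m, g n = 0) ∧ ∀ n, ∃ j : ℕ, addOrderOf (g n) = p ^ j} := by
    intro p hp
    haveI := hSylow p hp
    set S : Set X := {g : X | g ∈ G ∧ ∀ n, ∃ j : ℕ, addOrderOf (g n) = p ^ j} with hS
    have h0 : (0 : X) ∈ S := by
      refine ⟨G.zero_mem, fun n => ⟨0, ?_⟩⟩
      show addOrderOf (0 : A n) = p ^ 0
      simp
    obtain ⟨N, hNc, hNn⟩ :=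
      exists_compact_mem_nhds (⟨0, h0⟩ : {g : X // g ∈ G ∧ ∀ n, ∃ k : ℕ, addOrderOf (g n) = p ^ k})
    replace hNn := (mem_nhds_induced Subtype.val _ N).mp hNn
    obtain ⟨U, hU, hUN⟩ := hNn
    rw [show ((⟨0, h0⟩ : {g : X // g ∈ G ∧ ∀ n, ∃ k : ℕ, addOrderOf (g n) = p ^ k}) : X)
      = (0 : X) from rfl, nhds_pi, Filter.mem_pi] at hU
    obtain ⟨I, hIfin, t, ht, htU⟩ := hU
    obtain ⟨m, hm⟩ := hIfin.bddAbove
    refine ⟨m, ?_⟩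
    set V : Set X := {g : X | ∀ n ≤ m, g n = 0} with hV
    have hVU : V ⊆ U := by
      intro g hg
      refine htU fun n hn => ?_
      have : g n = 0 := hg n (hm hn)
      rw [this]
      exact mem_of_mem_nhds (ht n)
    have hD : IsCompact (Subtype.val ⁻¹' V :
        Set {g : X // g ∈ G ∧ ∀ n, ∃ k : ℕ, addOrderOf (g n) = p ^ k}) := by
      refine hNc.of_isClosed_subset ((stmt15_closed_van m).preimage continuous_subtype_val) ?_
      exact fun x hx => hUN (hVU hx)
    have himg := hD.image continuous_subtype_val
    convert himg using 1
    ext g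
    constructor
    · rintro ⟨⟨hgG, hgv⟩, hgo⟩
      exact ⟨⟨g, hgG, hgo⟩, hgv, rfl⟩
    · rintro ⟨⟨g', hg'⟩, hgv, rfl⟩
      exact ⟨⟨hg'.1, hgv⟩, hg'.2⟩
  choose mfun hmfun using fun k => step1 (pk k) (hpk k)
  -- the strictly increasing sequence
  set i : ℕ → ℕ := fun k => (Finset.range (k + 1)).sup mfun + k with hi
  have hmono : StrictMono i := by
    apply strictMono_nat_of_lt_succ
    intro k
    have : (Finset.range (k + 1)).sup mfun ≤ (Finset.range (k + 1 + 1)).sup mfun :=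
      Finset.sup_mono (Finset.range_subset_range.mpr (by omega))
    simp only [hi]
    omega
  have hge : ∀ k, mfun k ≤ i k := fun k =>
    le_trans (Finset.le_sup (Finset.self_mem_range_succ k)) (Nat.le_add_right _ _)
  have hik : ∀ k, k ≤ i k := fun k => Nat.le_add_left _ _
  set K : ℕ → Set X := fun k => {g : X |
      (g ∈ G ∧ ∀ m ≤ i k, g m = 0) ∧ ∀ n, ∃ j : ℕ, addOrderOf (g n) = pk k ^ j} with hK
  have hKclosed : ∀ k, IsClosed (K k) := by
    intro k
    have : K k = ((G : Set X) ∩ {g : X | ∀ n ≤ i k, g n = 0}) ∩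
        {g : X | ∀ n, ∃ j : ℕ, addOrderOf (g n) = pk k ^ j} := by
      ext g; simp only [hK, Set.mem_setOf_eq, Set.mem_inter_iff, SetLike.mem_coe]; try tauto
    rw [this]
    exact ((hclosed.inter (stmt15_closed_van _)).inter (stmt15_closed_ord _))
  have hKcompact : ∀ k, IsCompact (K k) := by
    intro k
    refine (hmfun k).of_isClosed_subset (hKclosed k) ?_
    rintro g ⟨⟨hgG, hgv⟩, hgo⟩
    exact ⟨⟨hgG, fun n hn => hgv n (hn.trans (hge k))⟩, hgo⟩
  -- algebraic structure of the K k
  have hK0 : ∀ k, (0 : X) ∈ K k := by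
    intro k
    refine ⟨⟨G.zero_mem, fun n _ => rfl⟩, fun n => ⟨0, ?_⟩⟩
    show addOrderOf (0 : A n) = pk k ^ 0
    simp
  have hKadd : ∀ k, ∀ g h : X, g ∈ K k → h ∈ K k → g + h ∈ K k := by
    rintro k g h ⟨⟨hgG, hgv⟩, hgo⟩ ⟨⟨hhG, hhv⟩, hho⟩
    refine ⟨⟨G.add_mem hgG hhG, fun n hn => ?_⟩, fun n => stmt15_ord_add (hpk k) (hgo n) (hho n)⟩
    show g n + h n = 0
    rw [hgv n hn, hhv n hn, add_zero]
  have hKneg : ∀ k, ∀ g : X, g ∈ K k → -g ∈ K k := by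
    rintro k g ⟨⟨hgG, hgv⟩, hgo⟩
    refine ⟨⟨G.neg_mem hgG, fun n hn => by
      show -(g n) = 0
      rw [hgv n hn, neg_zero]⟩, fun n => ?_⟩
    rw [show (-g) n = -(g n) from rfl, addOrderOf_neg]
    exact hgo n
  -- the map from the compact product
  haveI : ∀ k, CompactSpace (K k) := fun k => isCompact_iff_compactSpace.mp (hKcompact k)
  set φ : (∀ k, K k) → X := fun f => fun n => ∑ k ∈ Finset.range n, (f k : X) n with hφ
  have hφcont : Continuous φ := by
    refine continuous_pi fun n => ?_
    refine continuous_finset_sum _ fun k _ => ?_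
    exact (continuous_apply n).comp (continuous_subtype_val.comp (continuous_apply k))
  have hCc : IsCompact (Set.range φ) := isCompact_range hφcont
  have hCclosed : IsClosed (Set.range φ) := hCc.isClosed
  -- range φ is a subgroup
  set H : AddSubgroup X :=
    { carrier := Set.range φ
      zero_mem' := ⟨fun k => ⟨0, hK0 k⟩, by
        funext n
        show ∑ _k ∈ Finset.range n, (0 : A n) = 0
        exact Finset.sum_const_zero⟩
      add_mem' := by
        rintro a b ⟨f, rfl⟩ ⟨f', rfl⟩
        refine ⟨fun k => ⟨(f k : X) + (f' k : X), hKadd k _ _ (f k).2 (f' k).2⟩, ?_⟩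
        funext n
        show ∑ k ∈ Finset.range n, ((f k : X) n + (f' k : X) n) = (φ f) n + (φ f') n
        rw [Finset.sum_add_distrib]
      neg_mem' := by
        rintro a ⟨f, rfl⟩
        refine ⟨fun k => ⟨-(f k : X), hKneg k _ (f k).2⟩, ?_⟩
        funext n
        show ∑ k ∈ Finset.range n, (-((f k : X) n)) = -((φ f) n)
        rw [Finset.sum_neg_distrib] } with hH
  -- each K k lies in range φ
  have hKsub : ∀ k, K k ⊆ Set.range φ := by
    intro j g hg
    refine ⟨fun k => if h : k = j then ⟨g, h ▸ hg⟩ else ⟨0, hK0 k⟩, ?_⟩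
    funext n
    have hcoe : ∀ k, ((if h : k = j then (⟨g, h ▸ hg⟩ : K k) else ⟨0, hK0 k⟩ : K k) : X)
        = if k = j then g else 0 := by
      intro k; split <;> simp_all
    have happ : ∀ k, ((if k = j then g else 0 : X)) n = if k = j then g n else 0 := by
      intro k; split <;> rfl
    show (∑ k ∈ Finset.range n, ((if h : k = j then (⟨g, h ▸ hg⟩ : K k)
        else ⟨0, hK0 k⟩ : K k) : X) n) = g n
    rw [Finset.sum_congr rfl (fun k _ => by rw [hcoe k, happ k])]
    rw [Finset.sum_ite_eq' (Finset.range n) j (fun _ => g n)]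
    by_cases hj : j ∈ Finset.range n
    · simp [hj]
    · have hn : n ≤ j := by simpa [Finset.mem_range, not_lt] using hj
      simp only [hj, if_false]
      exact (hg.1.2 n (hn.trans (hik j))).symm
  -- the generated subgroup is inside range φ
  have hgen : (AddSubgroup.closure (⋃ k, K k) : Set X) ⊆ Set.range φ := by
    have : AddSubgroup.closure (⋃ k, K k) ≤ H := by
      rw [AddSubgroup.closure_le]
      exact Set.iUnion_subset fun k => hKsub k
    exact this
  have hcl : closure (AddSubgroup.closure (⋃ k, K k) : Set X) ⊆ Set.range φ :=
    closure_minimal hgen hCclosed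
  refine ⟨i, hmono, hKcompact, hCc.of_isClosed_subset isClosed_closure hcl, ?_⟩
  refine closure_minimal ?_ hclosed
  have : AddSubgroup.closure (⋃ k, K k) ≤ G := by
    rw [AddSubgroup.closure_le]
    exact Set.iUnion_subset fun k g hg => hg.1.1
  exact this
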